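/- Let f : ℝ^d → ℝ be convex C¹, satisfy a weak quasi-convexity/Łojasiewicz condition ‖∇f(x)‖^{r₁}·‖x−x*‖^{r₂} ≥ τ(f(x)−f(x*)) with r₁ = r₂ = 1. Then for any p ∈ ℕ with p ≥ 2 and any ℝ^d-valued random variable X with sufficient integrability, E[‖∇f(X)‖² (f(X)−f(x*))^{p−1}] ≥ E[(f(X)−f(x*))^p]^{1+1/p} · E[‖X−x*‖^{2p}]^{−1/p}. -/

import Mathlib

open MeasureTheory

/-- Hölder-type lower bound under weak quasi-convexity with `r₁ = r₂ = 1`: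
`E[‖∇f(X)‖² (f(X)−f*)^{p−1}] ≥ E[(f(X)−f*)^p]^{1+1/p} E[‖X−x*‖^{2p}]^{−1/p}`. -/
theorem stmt_13 {d : ℕ} (f : EuclideanSpace ℝ (Fin d) → ℝ)
    (hconv : ConvexOn ℝ Set.univ f) (hf : ContDiff ℝ 1 f)
    (xstar : EuclideanSpace ℝ (Fin d)) (hmin : ∀ x, f xstar ≤ f x)
    (hF3 : ∀ x, f x - f xstar ≤ ‖gradient f x‖ * ‖x - xstar‖)
    (p : ℕ) (hp : 2 ≤ p)
    {Ω : Type*} [MeasurableSpace Ω] (P : Measure Ω) [IsProbabilityMeasure P]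
    (X : Ω → EuclideanSpace ℝ (Fin d)) (hX : AEStronglyMeasurable X P)
    (hint1 : Integrable (fun ω => ‖gradient f (X ω)‖ ^ 2 * (f (X ω) - f xstar) ^ (p - 1)) P)
    (hint2 : Integrable (fun ω => (f (X ω) - f xstar) ^ p) P)
    (hint3 : Integrable (fun ω => ‖X ω - xstar‖ ^ (2 * p)) P)
    (hpos : 0 < ∫ ω, ‖X ω - xstar‖ ^ (2 * p) ∂P) :
    (∫ ω, (f (X ω) - f xstar) ^ p ∂P) ^ ((1 : ℝ) + 1 / (p : ℝ)) *
      (∫ ω, ‖X ω - xstar‖ ^ (2 * p) ∂P) ^ (-(1 : ℝ) / (p : ℝ)) ≤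
      ∫ ω, ‖gradient f (X ω)‖ ^ 2 * (f (X ω) - f xstar) ^ (p - 1) ∂P := by
  have hp1 : (1:ℝ) ≤ (p:ℝ) := by exact_mod_cast le_trans (by norm_num) hp
  have hp0 : (0:ℝ) < (p:ℝ) := lt_of_lt_of_le one_pos hp1
  have hp1pos : (0:ℝ) < (p:ℝ) + 1 := by linarith
  set s : ℝ := (p:ℝ) / ((p:ℝ) + 1) with hs
  set t : ℝ := 1 / ((p:ℝ) + 1) with ht
  have hs0 : 0 < s := by positivity
  have ht0 : 0 < t := by positivity
  have hst : s + t = 1 := by rw [hs, ht]; field_simp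
  set F : Ω → ℝ := fun ω => f (X ω) - f xstar with hFdef
  set G : Ω → ℝ := fun ω => ‖gradient f (X ω)‖ with hGdef
  set H : Ω → ℝ := fun ω => ‖X ω - xstar‖ with hHdef
  have hF0 : ∀ ω, 0 ≤ F ω := fun ω => sub_nonneg.2 (hmin _)
  have hG0 : ∀ ω, 0 ≤ G ω := fun ω => norm_nonneg _
  have hH0 : ∀ ω, 0 ≤ H ω := fun ω => norm_nonneg _
  have hcast : ((p - 1 : ℕ) : ℝ) = (p:ℝ) - 1 := by
    have h1p : 1 ≤ p := le_trans (by norm_num) hp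
    push_cast [h1p]; ring
  -- pointwise inequality
  have hpt : ∀ ω, F ω ^ p ≤ (G ω ^ 2 * F ω ^ (p - 1)) ^ s * (H ω ^ (2 * p)) ^ t := by
    intro ω
    have hFGH : F ω ≤ G ω * H ω := hF3 (X ω)
    have h2s : (0:ℝ) ≤ 2 * s := by positivity
    have step1 : F ω ^ (2 * s) ≤ (G ω * H ω) ^ (2 * s) :=
      Real.rpow_le_rpow (hF0 ω) hFGH h2s
    have step2 : F ω ^ (2 * s) * F ω ^ (((p:ℝ) - 1) * s)
        ≤ (G ω * H ω) ^ (2 * s) * F ω ^ (((p:ℝ) - 1) * s) :=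
      mul_le_mul_of_nonneg_right step1 (Real.rpow_nonneg (hF0 ω) _)
    have hsum : 2 * s + ((p:ℝ) - 1) * s = (p:ℝ) := by
      rw [hs]; field_simp; ring
    have hLHS : F ω ^ (2 * s) * F ω ^ (((p:ℝ) - 1) * s) = F ω ^ p := by
      rw [← Real.rpow_natCast (F ω) p, ← Real.rpow_add' (hF0 ω)]
      · rw [hsum]
      · rw [hsum]; exact ne_of_gt hp0
    have h1 : (G ω ^ 2 * F ω ^ (p - 1)) ^ s = G ω ^ (2 * s) * F ω ^ (((p:ℝ) - 1) * s) := by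
      rw [Real.mul_rpow (pow_nonneg (hG0 ω) 2) (pow_nonneg (hF0 ω) _),
        ← Real.rpow_natCast (G ω) 2, ← Real.rpow_natCast (F ω) (p - 1),
        ← Real.rpow_mul (hG0 ω), ← Real.rpow_mul (hF0 ω), hcast]
      norm_num
    have h2 : (H ω ^ (2 * p)) ^ t = H ω ^ (2 * s) := by
      rw [← Real.rpow_natCast (H ω) (2 * p), ← Real.rpow_mul (hH0 ω)]
      congr 1
      push_cast
      rw [hs, ht]; field_simp
    have h3 : (G ω * H ω) ^ (2 * s) = G ω ^ (2 * s) * H ω ^ (2 * s) :=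
      Real.mul_rpow (hG0 ω) (hH0 ω)
    calc F ω ^ p = F ω ^ (2 * s) * F ω ^ (((p:ℝ) - 1) * s) := hLHS.symm
      _ ≤ (G ω * H ω) ^ (2 * s) * F ω ^ (((p:ℝ) - 1) * s) := step2
      _ = (G ω ^ 2 * F ω ^ (p - 1)) ^ s * (H ω ^ (2 * p)) ^ t := by
          rw [h1, h2, h3]; ring
  -- notation for the three integrals
  set I : ℝ := ∫ ω, F ω ^ p ∂P with hI
  set A : ℝ := ∫ ω, G ω ^ 2 * F ω ^ (p - 1) ∂P with hA
  set B : ℝ := ∫ ω, H ω ^ (2 * p) ∂P with hB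
  have hI0 : 0 ≤ I := integral_nonneg fun ω => pow_nonneg (hF0 ω) p
  have hA0 : 0 ≤ A := integral_nonneg fun ω => mul_nonneg (pow_nonneg (hG0 ω) 2) (pow_nonneg (hF0 ω) _)
  have hB0 : 0 < B := hpos
  have haeF : 0 ≤ᵐ[P] fun ω => F ω ^ p := Filter.Eventually.of_forall fun ω => pow_nonneg (hF0 ω) p
  have haeA : 0 ≤ᵐ[P] fun ω => G ω ^ 2 * F ω ^ (p - 1) :=
    Filter.Eventually.of_forall fun ω => mul_nonneg (pow_nonneg (hG0 ω) 2) (pow_nonneg (hF0 ω) _)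
  have haeB : 0 ≤ᵐ[P] fun ω => H ω ^ (2 * p) :=
    Filter.Eventually.of_forall fun ω => pow_nonneg (hH0 ω) _
  -- Hölder via lintegral
  have hmeasA : AEMeasurable (fun ω => ENNReal.ofReal (G ω ^ 2 * F ω ^ (p - 1))) P :=
    ENNReal.measurable_ofReal.comp_aemeasurable hint1.aestronglyMeasurable.aemeasurable
  have hmeasB : AEMeasurable (fun ω => ENNReal.ofReal (H ω ^ (2 * p))) P :=
    ENNReal.measurable_ofReal.comp_aemeasurable hint3.aestronglyMeasurable.aemeasurable
  have holder : ENNReal.ofReal I ≤ ENNReal.ofReal A ^ s * ENNReal.ofReal B ^ t := by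
    calc ENNReal.ofReal I = ∫⁻ ω, ENNReal.ofReal (F ω ^ p) ∂P :=
          ofReal_integral_eq_lintegral_ofReal hint2 haeF
      _ ≤ ∫⁻ ω, ENNReal.ofReal (G ω ^ 2 * F ω ^ (p - 1)) ^ s
            * ENNReal.ofReal (H ω ^ (2 * p)) ^ t ∂P := by
          refine lintegral_mono fun ω => ?_
          rw [ENNReal.ofReal_rpow_of_nonneg
              (mul_nonneg (pow_nonneg (hG0 ω) 2) (pow_nonneg (hF0 ω) _)) hs0.le,
            ENNReal.ofReal_rpow_of_nonneg (pow_nonneg (hH0 ω) _) ht0.le,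
            ← ENNReal.ofReal_mul (Real.rpow_nonneg
              (mul_nonneg (pow_nonneg (hG0 ω) 2) (pow_nonneg (hF0 ω) _)) s)]
          exact ENNReal.ofReal_le_ofReal (hpt ω)
      _ ≤ (∫⁻ ω, ENNReal.ofReal (G ω ^ 2 * F ω ^ (p - 1)) ∂P) ^ s
            * (∫⁻ ω, ENNReal.ofReal (H ω ^ (2 * p)) ∂P) ^ t :=
          ENNReal.lintegral_mul_norm_pow_le hmeasA hmeasB hs0.le ht0.le hst
      _ = ENNReal.ofReal A ^ s * ENNReal.ofReal B ^ t := by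
          rw [ofReal_integral_eq_lintegral_ofReal hint1 haeA,
            ofReal_integral_eq_lintegral_ofReal hint3 haeB]
  have hreal : I ≤ A ^ s * B ^ t := by
    have : ENNReal.ofReal I ≤ ENNReal.ofReal (A ^ s * B ^ t) := by
      rwa [ENNReal.ofReal_mul (Real.rpow_nonneg hA0 s),
        ← ENNReal.ofReal_rpow_of_nonneg hA0 hs0.le,
        ← ENNReal.ofReal_rpow_of_nonneg hB0.le ht0.le]
    exact (ENNReal.ofReal_le_ofReal_iff (mul_nonneg (Real.rpow_nonneg hA0 s) (Real.rpow_nonneg hB0.le t))).mp this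
  -- conclude
  have hsinv : (1:ℝ) + 1 / (p:ℝ) = 1 / s := by
    rw [hs]; field_simp
  have hmain : I ^ ((1:ℝ) + 1 / (p:ℝ)) ≤ A * B ^ ((1:ℝ) / (p:ℝ)) := by
    rw [hsinv]
    calc I ^ ((1:ℝ) / s) ≤ (A ^ s * B ^ t) ^ ((1:ℝ) / s) :=
          Real.rpow_le_rpow hI0 hreal (by positivity)
      _ = A * B ^ ((1:ℝ) / (p:ℝ)) := by
          rw [Real.mul_rpow (by positivity) (by positivity),
            ← Real.rpow_mul hA0, ← Real.rpow_mul hB0.le]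
          congr 1
          · rw [mul_one_div, div_self (ne_of_gt hs0), Real.rpow_one]
          · congr 1
            rw [mul_one_div]
            rw [hs, ht]
            field_simp
  have hBne : B ^ (-(1:ℝ) / (p:ℝ)) ≥ 0 := (Real.rpow_pos_of_pos hB0 _).le
  calc I ^ ((1:ℝ) + 1 / (p:ℝ)) * B ^ (-(1:ℝ) / (p:ℝ))
      ≤ (A * B ^ ((1:ℝ) / (p:ℝ))) * B ^ (-(1:ℝ) / (p:ℝ)) :=
        mul_le_mul_of_nonneg_right hmain hBne
    _ = A := by
        rw [mul_assoc, ← Real.rpow_add hB0,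
          show (1:ℝ) / ↑p + -1 / ↑p = 0 by ring, Real.rpow_zero, mul_one]
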